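/- Let T > 0, let λ : ℝ → ℝ be continuously differentiable and strictly positive on [0,T], and let λ_θ : ℝ → ℝ be twice continuously differentiable and strictly positive on [0,T]. Set g(t) = λ'(t)/λ(t) and g_θ(t) = λ_θ'(t)/λ_θ(t). For each N ≥ 1, let S_N = {t ∈ ℝ^N : 0 ≤ t_1 ≤ ⋯ ≤ t_N ≤ T} and p_N(t) = (∏_{n=1}^N λ(t_n))·exp(−∫_0^T λ(s) ds). Assume that each of the following series over N ≥ 1 converges absolutely: ∑_N ∫_{S_N} p_N(t)·∑_{n=1}^N (g(t_n) − g_θ(t_n))² dt, ∑_N ∫_{S_N} p_N(t)·∑_{n=1}^N ((1/2)·g_θ(t_n)² + g_θ'(t_n)) dt, ∑_N ∫_{S_N} p_N(t)·∑_{n=1}^N g(t_n)² dt, ∑_N ∫_{S_{N−1}} p_N(0, s_1,…,s_{N−1}) ds, and ∑_N ∫_{S_{N−1}} p_N(s_1,…,s_{N−1}, T) ds (the N = 1 boundary terms being p_1(0) and p_1(T)). Then (1/2)·∑_{N≥1} ∫_{S_N} p_N(t)·∑_n (g(t_n) − g_θ(t_n))² dt = ∑_{N≥1} ∫_{S_N}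 p_N(t)·∑_n ((1/2)·g_θ(t_n)² + g_θ'(t_n)) dt + (1/2)·∑_{N≥1} ∫_{S_N} p_N(t)·∑_n g(t_n)² dt + g_θ(0)·∑_{N≥1} ∫_{S_{N−1}} p_N(0, s) ds − g_θ(T)·∑_{N≥1} ∫_{S_{N−1}} p_N(s, T) ds. In particular, the explicit score-matching objective equals the implicit one plus a λ_θ-independent constant if and only if the sum of the two boundary series, weighted by g_θ(0) and g_θ(T), does not depend on λ_θ. -/

import Mathlib

open MeasureTheory Real Set

/-- The ordered simplex `S_N = {t ∈ ℝ^N : 0 ≤ t 1 ≤ ⋯ ≤ t N ≤ T}`. -/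
def ordSimplex (N : ℕ) (T : ℝ) : Set (Fin N → ℝ) :=
  {t | Monotone t ∧ ∀ i, t i ∈ Set.Icc 0 T}

/-- The Poisson density on the ordered simplex:
`p_N t = (∏ n, lam (t n)) · exp (-∫_0^T lam)`. -/
noncomputable def poissonDensity (lam : ℝ → ℝ) (T : ℝ) {N : ℕ} (t : Fin N → ℝ) : ℝ :=
  (∏ n, lam (t n)) * Real.exp (-(∫ s in (0:ℝ)..T, lam s))


lemma ordSimplex_isClosed (N : ℕ) (T : ℝ) : IsClosed (ordSimplex N T) := by
  have h1 : IsClosed {t : Fin N → ℝ | Monotone t} := by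
    have : {t : Fin N → ℝ | Monotone t}
        = ⋂ (i : Fin N) (j : Fin N) (_ : i ≤ j), {t : Fin N → ℝ | t i ≤ t j} := by
      ext t
      constructor
      · intro h
        simp only [Set.mem_iInter]
        intro i j hij; exact h hij
      · intro h
        simp only [Set.mem_iInter] at h
        intro a b hab; exact h a b hab
    rw [this]
    exact isClosed_iInter fun i => isClosed_iInter fun j => isClosed_iInter fun _ =>
      isClosed_le (continuous_apply i) (continuous_apply j)
  have h2 : IsClosed {t : Fin N → ℝ | ∀ i, t i ∈ Set.Icc 0 T} := by
    have : {t : Fin N → ℝ | ∀ i, t i ∈ Set.Icc 0 T}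
        = ⋂ (i : Fin N), (fun t : Fin N → ℝ => t i) ⁻¹' (Set.Icc 0 T) := by
      ext t; simp
    rw [this]
    exact isClosed_iInter fun i => isClosed_Icc.preimage (continuous_apply i)
  exact h1.inter h2

lemma ordSimplex_isCompact (N : ℕ) (T : ℝ) : IsCompact (ordSimplex N T) := by
  refine IsCompact.of_isClosed_subset
    (isCompact_univ_pi (fun _ : Fin N => isCompact_Icc (a := (0:ℝ)) (b := T)))
    (ordSimplex_isClosed N T) ?_
  intro t ht i _
  exact ht.2 i

lemma snoc_mem_ordSimplex_iff {N : ℕ} {b x : ℝ} {s : Fin N → ℝ} :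
    Fin.snoc s x ∈ ordSimplex (N+1) b ↔ x ∈ Set.Icc 0 b ∧ s ∈ ordSimplex N x := by
  constructor
  · rintro ⟨hmono, hmem⟩
    have hx := hmem (Fin.last N)
    rw [Fin.snoc_last] at hx
    refine ⟨hx, ?_, ?_⟩
    · intro i j hij
      have := hmono (Fin.castSucc_le_castSucc_iff.2 hij)
      simpa using this
    · intro i
      have h0 := hmem i.castSucc
      rw [Fin.snoc_castSucc] at h0
      have hle : s i ≤ x := by
        have := hmono (Fin.le_last i.castSucc)
        simpa using this
      exact ⟨h0.1, hle⟩
  · rintro ⟨hx, hmono, hmem⟩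
    constructor
    · intro i j hij
      rcases Fin.eq_castSucc_or_eq_last j with ⟨j', rfl⟩ | rfl
      · rcases Fin.eq_castSucc_or_eq_last i with ⟨i', rfl⟩ | rfl
        · rw [Fin.snoc_castSucc, Fin.snoc_castSucc]
          exact hmono (Fin.castSucc_le_castSucc_iff.1 hij)
        · exact absurd hij (not_le.2 (Fin.castSucc_lt_last j'))
      · rw [Fin.snoc_last]
        rcases Fin.eq_castSucc_or_eq_last i with ⟨i', rfl⟩ | rfl
        · rw [Fin.snoc_castSucc]; exact (hmem i').2
        · rw [Fin.snoc_last]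
    · intro i
      rcases Fin.eq_castSucc_or_eq_last i with ⟨i', rfl⟩ | rfl
      · rw [Fin.snoc_castSucc]; exact ⟨(hmem i').1, le_trans (hmem i').2 hx.2⟩
      · rw [Fin.snoc_last]; exact hx

lemma ordSimplex_zero (b : ℝ) : ordSimplex 0 b = Set.univ := by
  refine Set.eq_univ_of_forall fun t => ⟨fun i j _ => ?_, fun i => i.elim0⟩
  exact i.elim0

lemma ordSimplex_slice (N : ℕ) (b : ℝ) (G : (Fin (N+1) → ℝ) → ℝ) (hG : Continuous G) :
    ∫ t in ordSimplex (N+1) b, G t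
      = ∫ x in Set.Icc 0 b, ∫ s in ordSimplex N x, G (Fin.snoc s x) := by
  have hSmeas := (ordSimplex_isClosed (N+1) b).measurableSet
  have hcomp := ordSimplex_isCompact (N+1) b
  have hint : Integrable ((ordSimplex (N+1) b).indicator G) := by
    rw [integrable_indicator_iff hSmeas]
    exact hG.continuousOn.integrableOn_compact hcomp
  set e := MeasurableEquiv.piFinSuccAbove (fun _ : Fin (N+1) => ℝ) (Fin.last N) with he
  have hmp := (volume_preserving_piFinSuccAbove (fun _ : Fin (N+1) => ℝ) (Fin.last N)).symm e
  have hsymm : ∀ (p : ℝ × (Fin N → ℝ)), e.symm p = Fin.snoc p.2 p.1 := by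
    intro p
    show (Fin.insertNthEquiv (fun _ => ℝ) (Fin.last N)) p = _
    simp [Fin.insertNthEquiv]
  have step1 : ∫ t in ordSimplex (N+1) b, G t
      = ∫ p : ℝ × (Fin N → ℝ), ((ordSimplex (N+1) b).indicator G) (Fin.snoc p.2 p.1) := by
    rw [← integral_indicator hSmeas]
    rw [← hmp.integral_comp' ((ordSimplex (N+1) b).indicator G)]
    congr 1; ext p; rw [hsymm]
  rw [step1]
  have hint2 : Integrable (fun p : ℝ × (Fin N → ℝ) =>
      ((ordSimplex (N+1) b).indicator G) (Fin.snoc p.2 p.1)) (volume.prod volume) := by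
    have := (hmp.integrable_comp_emb e.symm.measurableEmbedding).2 hint
    convert this using 2 with p
    rw [Function.comp_apply, hsymm]
    exact (MeasureTheory.Measure.volume_eq_prod _ _).symm
  rw [MeasureTheory.Measure.volume_eq_prod, MeasureTheory.integral_prod _ hint2]
  have key : ∀ x : ℝ, (∫ s : Fin N → ℝ, ((ordSimplex (N+1) b).indicator G) (Fin.snoc s x))
      = (Set.Icc 0 b).indicator (fun x => ∫ s in ordSimplex N x, G (Fin.snoc s x)) x := by
    intro x
    by_cases hx : x ∈ Set.Icc 0 b
    · rw [Set.indicator_of_mem hx, ← integral_indicator (ordSimplex_isClosed N x).measurableSet]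
      congr 1; ext s
      by_cases hs : s ∈ ordSimplex N x
      · rw [Set.indicator_of_mem (snoc_mem_ordSimplex_iff.2 ⟨hx, hs⟩), Set.indicator_of_mem hs]
      · rw [Set.indicator_of_notMem (fun hc => hs (snoc_mem_ordSimplex_iff.1 hc).2),
          Set.indicator_of_notMem hs]
    · rw [Set.indicator_of_notMem hx]
      have : ∀ s : Fin N → ℝ, ((ordSimplex (N+1) b).indicator G) (Fin.snoc s x) = 0 := fun s =>
        Set.indicator_of_notMem (fun hc => hx (snoc_mem_ordSimplex_iff.1 hc).1) _
      simp [this]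
  simp_rw [key]
  rw [integral_indicator measurableSet_Icc]

lemma volume_fin0_univ : (volume : Measure (Fin 0 → ℝ)) Set.univ = 1 := by
  rw [← Set.pi_univ Set.univ, volume_pi, Measure.pi_pi]
  simp

lemma integral_fin0 (c : ℝ) : ∫ _ : Fin 0 → ℝ, c = c := by
  rw [integral_const, measureReal_def, volume_fin0_univ]
  simp

lemma hasDerivAt_primitive (f : ℝ → ℝ) (hf : Continuous f) (x : ℝ) :
    HasDerivAt (fun y => ∫ u in (0:ℝ)..y, f u) (f x) x :=
  intervalIntegral.integral_hasDerivAt_right (hf.intervalIntegrable _ _)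
    (hf.stronglyMeasurable.stronglyMeasurableAtFilter) hf.continuousAt

lemma continuous_primitive' (f : ℝ → ℝ) (hf : Continuous f) :
    Continuous (fun y => ∫ u in (0:ℝ)..y, f u) :=
  continuous_iff_continuousAt.2 fun x => (hasDerivAt_primitive f hf x).continuousAt

lemma integral_ordSimplex_prod (f : ℝ → ℝ) (hf : Continuous f) :
    ∀ (N : ℕ), ∀ b : ℝ, 0 ≤ b →
      ∫ t in ordSimplex N b, ∏ n, f (t n)
        = (∫ u in (0:ℝ)..b, f u)^N / (Nat.factorial N) := by
  intro N
  induction N with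
  | zero =>
    intro b _
    rw [ordSimplex_zero, Measure.restrict_univ]
    simp only [Finset.univ_eq_empty, Finset.prod_empty, pow_zero, Nat.factorial_zero,
      Nat.cast_one, div_one]
    exact integral_fin0 1
  | succ N ih =>
    intro b hb
    have hcont : Continuous (fun t : Fin (N+1) → ℝ => ∏ n, f (t n)) :=
      continuous_finset_prod _ fun i _ => hf.comp (continuous_apply i)
    rw [ordSimplex_slice N b _ hcont]
    have hinner : Set.EqOn (fun x => ∫ s in ordSimplex N x, ∏ n : Fin (N+1), f ((Fin.snoc s x : Fin (N+1) → ℝ) n))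
        (fun x => f x * ((∫ u in (0:ℝ)..x, f u)^N / (Nat.factorial N))) (Set.Icc 0 b) := by
      intro x hx
      have hprod : ∀ s : Fin N → ℝ,
          ∏ n : Fin (N+1), f ((Fin.snoc s x : Fin (N+1) → ℝ) n) = (∏ n : Fin N, f (s n)) * f x := by
        intro s; rw [Fin.prod_univ_castSucc]; simp
      simp only
      simp_rw [hprod]
      rw [MeasureTheory.integral_mul_const, ih x hx.1, mul_comm]
    rw [setIntegral_congr_fun measurableSet_Icc hinner,
      MeasureTheory.integral_Icc_eq_integral_Ioc, ← intervalIntegral.integral_of_le hb]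
    have hF : ∀ x : ℝ, HasDerivAt (fun y => (∫ u in (0:ℝ)..y, f u)^(N+1) / (Nat.factorial (N+1)))
        (f x * ((∫ u in (0:ℝ)..x, f u)^N / (Nat.factorial N))) x := by
      intro x
      have h1 := ((hasDerivAt_primitive f hf x).pow (N+1)).div_const ((Nat.factorial (N+1) : ℕ) : ℝ)
      refine h1.congr_deriv ?_
      rw [Nat.factorial_succ]
      have h0 : ((Nat.factorial N : ℕ) : ℝ) ≠ 0 := Nat.cast_ne_zero.2 (Nat.factorial_ne_zero N)
      push_cast
      field_simp
    have hii : IntervalIntegrable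
        (fun x => f x * ((∫ u in (0:ℝ)..x, f u)^N / (Nat.factorial N))) volume 0 b :=
      (hf.mul (((continuous_primitive' f hf).pow N).div_const _)).intervalIntegrable _ _
    rw [intervalIntegral.integral_eq_sub_of_hasDerivAt (fun x _ => hF x) hii]
    simp

lemma integral_ordSimplex_sum (T : ℝ) (f φ Φ : ℝ → ℝ) (hf : Continuous f)
    (hφ : Continuous φ) (hΦ : Continuous Φ)
    (hΦd : ∀ x ∈ Set.Ioo 0 T, HasDerivAt Φ (f x * φ x) x) :
    ∀ (N : ℕ), ∀ b ∈ Set.Icc (0:ℝ) T,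
      ∫ t in ordSimplex (N+1) b, (∑ n, φ (t n)) * ∏ n, f (t n)
        = (∫ u in (0:ℝ)..b, f u)^N / (Nat.factorial N) * (Φ b - Φ 0) := by
  intro N
  induction N with
  | zero =>
    intro b hb
    have hcont : Continuous (fun t : Fin 1 → ℝ => (∑ n, φ (t n)) * ∏ n, f (t n)) := by
      exact (continuous_finset_sum _ fun i _ => hφ.comp (continuous_apply i)).mul
        (continuous_finset_prod _ fun i _ => hf.comp (continuous_apply i))
    rw [ordSimplex_slice 0 b _ hcont]
    have hinner : Set.EqOn
        (fun x => ∫ s in ordSimplex 0 x,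
          (∑ n : Fin 1, φ ((Fin.snoc s x : Fin 1 → ℝ) n))
            * ∏ n : Fin 1, f ((Fin.snoc s x : Fin 1 → ℝ) n))
        (fun x => φ x * f x) (Set.Icc 0 b) := by
      intro x _
      have hv : ∀ s : Fin 0 → ℝ,
          (∑ n : Fin 1, φ ((Fin.snoc s x : Fin 1 → ℝ) n))
            * ∏ n : Fin 1, f ((Fin.snoc s x : Fin 1 → ℝ) n) = φ x * f x := by
        intro s
        have h0 : (Fin.snoc s x : Fin 1 → ℝ) 0 = x := by
          have : (0 : Fin 1) = Fin.last 0 := rfl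
          rw [this, Fin.snoc_last]
        rw [Fin.sum_univ_one, Fin.prod_univ_one, h0]
      simp only
      simp_rw [hv]
      rw [ordSimplex_zero, Measure.restrict_univ]
      exact integral_fin0 _
    rw [setIntegral_congr_fun measurableSet_Icc hinner,
      MeasureTheory.integral_Icc_eq_integral_Ioc, ← intervalIntegral.integral_of_le hb.1]
    have := intervalIntegral.integral_eq_sub_of_hasDeriv_right_of_le hb.1
      hΦ.continuousOn
      (fun x hx => (hΦd x ⟨hx.1, lt_of_lt_of_le hx.2 hb.2⟩).hasDerivWithinAt)
      ((hf.mul hφ).intervalIntegrable _ _)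
    simp only [pow_zero, Nat.factorial_zero, Nat.cast_one]
    rw [show (fun x => φ x * f x) = fun x => f x * φ x from funext fun x => mul_comm _ _]
    rw [this]
    ring
  | succ N ih =>
    intro b hb
    have hcont : Continuous (fun t : Fin (N+2) → ℝ => (∑ n, φ (t n)) * ∏ n, f (t n)) := by
      exact (continuous_finset_sum _ fun i _ => hφ.comp (continuous_apply i)).mul
        (continuous_finset_prod _ fun i _ => hf.comp (continuous_apply i))
    rw [ordSimplex_slice (N+1) b _ hcont]
    set Lam := fun y => ∫ u in (0:ℝ)..y, f u with hLamdef
    have hLamc : Continuous Lam := continuous_primitive' f hf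
    have hcontS : Continuous (fun s : Fin (N+1) → ℝ => (∑ n, φ (s n)) * ∏ n, f (s n)) := by
      exact (continuous_finset_sum _ fun i _ => hφ.comp (continuous_apply i)).mul
        (continuous_finset_prod _ fun i _ => hf.comp (continuous_apply i))
    have hcontP : Continuous (fun s : Fin (N+1) → ℝ => ∏ n, f (s n)) :=
      continuous_finset_prod _ fun i _ => hf.comp (continuous_apply i)
    have hinner : Set.EqOn
        (fun x => ∫ s in ordSimplex (N+1) x,
          (∑ n : Fin (N+2), φ ((Fin.snoc s x : Fin (N+2) → ℝ) n))
            * ∏ n : Fin (N+2), f ((Fin.snoc s x : Fin (N+2) → ℝ) n))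
        (fun x => f x * (Lam x ^ N / (Nat.factorial N) * (Φ x - Φ 0))
          + (f x * φ x) * (Lam x ^ (N+1) / (Nat.factorial (N+1)))) (Set.Icc 0 b) := by
      intro x hx
      have hv : ∀ s : Fin (N+1) → ℝ,
          (∑ n : Fin (N+2), φ ((Fin.snoc s x : Fin (N+2) → ℝ) n))
            * ∏ n : Fin (N+2), f ((Fin.snoc s x : Fin (N+2) → ℝ) n)
          = f x * ((∑ n : Fin (N+1), φ (s n)) * ∏ n : Fin (N+1), f (s n))
            + (f x * φ x) * ∏ n : Fin (N+1), f (s n) := by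
        intro s
        rw [Fin.sum_univ_castSucc, Fin.prod_univ_castSucc]
        simp only [Fin.snoc_castSucc, Fin.snoc_last]
        ring
      simp only
      simp_rw [hv]
      have i1 : IntegrableOn (fun s : Fin (N+1) → ℝ =>
          f x * ((∑ n, φ (s n)) * ∏ n, f (s n))) (ordSimplex (N+1) x) :=
        ((continuous_const.mul hcontS).continuousOn).integrableOn_compact (ordSimplex_isCompact _ _)
      have i2 : IntegrableOn (fun s : Fin (N+1) → ℝ =>
          (f x * φ x) * ∏ n, f (s n)) (ordSimplex (N+1) x) :=
        ((continuous_const.mul hcontP).continuousOn).integrableOn_compact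
          (ordSimplex_isCompact _ _)
      rw [MeasureTheory.integral_add i1 i2, MeasureTheory.integral_const_mul,
        MeasureTheory.integral_const_mul, ih x ⟨hx.1, hx.2.trans hb.2⟩,
        integral_ordSimplex_prod f hf (N+1) x hx.1]
    rw [setIntegral_congr_fun measurableSet_Icc hinner,
      MeasureTheory.integral_Icc_eq_integral_Ioc, ← intervalIntegral.integral_of_le hb.1]
    have hFd : ∀ x ∈ Set.Ioo (0:ℝ) b,
        HasDerivAt (fun y => Lam y ^ (N+1) / (Nat.factorial (N+1)) * (Φ y - Φ 0))
          (f x * (Lam x ^ N / (Nat.factorial N) * (Φ x - Φ 0))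
            + (f x * φ x) * (Lam x ^ (N+1) / (Nat.factorial (N+1)))) x := by
      intro x hx
      have h1 := (((hasDerivAt_primitive f hf x).pow (N+1)).div_const
          ((Nat.factorial (N+1) : ℕ) : ℝ)).mul
        ((hΦd x ⟨hx.1, hx.2.trans_le hb.2⟩).sub_const (Φ 0))
      refine h1.congr_deriv ?_
      rw [Nat.factorial_succ]
      have h0 : ((Nat.factorial N : ℕ) : ℝ) ≠ 0 := Nat.cast_ne_zero.2 (Nat.factorial_ne_zero N)
      push_cast
      field_simp
      simp only [hLamdef, Pi.pow_apply]
      ring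
    have hFc : ContinuousOn (fun y => Lam y ^ (N+1) / (Nat.factorial (N+1)) * (Φ y - Φ 0))
        (Set.Icc 0 b) :=
      (((hLamc.pow _).div_const _).mul (hΦ.sub continuous_const)).continuousOn
    have hFint : IntervalIntegrable
        (fun x => f x * (Lam x ^ N / (Nat.factorial N) * (Φ x - Φ 0))
          + (f x * φ x) * (Lam x ^ (N+1) / (Nat.factorial (N+1)))) volume 0 b := by
      apply Continuous.intervalIntegrable
      exact (hf.mul (((hLamc.pow _).div_const _).mul (hΦ.sub continuous_const))).add
        ((hf.mul hφ).mul ((hLamc.pow _).div_const _))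
    rw [intervalIntegral.integral_eq_sub_of_hasDeriv_right_of_le hb.1 hFc
      (fun x hx => (hFd x hx).hasDerivWithinAt) hFint]
    have hLam0 : Lam 0 = 0 := intervalIntegral.integral_same
    simp [hLam0]
    exact Or.inl rfl

/-- for a Poisson process with intensity `lam` (score `g = lam'/lam`) and a
model intensity `lamθ` (score `gθ = lamθ'/lamθ`, whose derivative is
`lamθ''/lamθ - (lamθ'/lamθ)²`), assuming absolute convergence of all series over the
number of events `N = M + 1 ≥ 1`, the explicit score-matching objective equals the
implicit one plus a `lamθ`-independent constant plus the two boundary series weighted by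
`gθ 0` and `gθ T`. -/
theorem stmt_14 (T : ℝ) (hT : 0 < T)
    (lam lam' lamθ lamθ' lamθ'' : ℝ → ℝ)
    (hlam : ∀ t ∈ Set.Icc 0 T, HasDerivAt lam (lam' t) t)
    (hlam'c : ContinuousOn lam' (Set.Icc 0 T))
    (hlampos : ∀ t ∈ Set.Icc 0 T, 0 < lam t)
    (hlamθ : ∀ t ∈ Set.Icc 0 T, HasDerivAt lamθ (lamθ' t) t)
    (hlamθ' : ∀ t ∈ Set.Icc 0 T, HasDerivAt lamθ' (lamθ'' t) t)
    (hlamθ''c : ContinuousOn lamθ'' (Set.Icc 0 T))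
    (hlamθpos : ∀ t ∈ Set.Icc 0 T, 0 < lamθ t)
    (hS1 : Summable fun M : ℕ => ∫ t in ordSimplex (M + 1) T,
      poissonDensity lam T t * ∑ n : Fin (M + 1),
        (lam' (t n) / lam (t n) - lamθ' (t n) / lamθ (t n))^2)
    (hS2 : Summable fun M : ℕ => ∫ t in ordSimplex (M + 1) T,
      poissonDensity lam T t * ∑ n : Fin (M + 1),
        ((1/2) * (lamθ' (t n) / lamθ (t n))^2
          + (lamθ'' (t n) / lamθ (t n) - (lamθ' (t n) / lamθ (t n))^2)))
    (hS3 : Summable fun M : ℕ => ∫ t in ordSimplex (M + 1) T,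
      poissonDensity lam T t * ∑ n : Fin (M + 1), (lam' (t n) / lam (t n))^2)
    (hS4 : Summable fun M : ℕ => ∫ s in ordSimplex M T,
      poissonDensity lam T (Fin.cons 0 s))
    (hS5 : Summable fun M : ℕ => ∫ s in ordSimplex M T,
      poissonDensity lam T (Fin.snoc s T)) :
    (1/2) * ∑' M : ℕ, (∫ t in ordSimplex (M + 1) T,
        poissonDensity lam T t * ∑ n : Fin (M + 1),
          (lam' (t n) / lam (t n) - lamθ' (t n) / lamθ (t n))^2)
    = (∑' M : ℕ, ∫ t in ordSimplex (M + 1) T,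
        poissonDensity lam T t * ∑ n : Fin (M + 1),
          ((1/2) * (lamθ' (t n) / lamθ (t n))^2
            + (lamθ'' (t n) / lamθ (t n) - (lamθ' (t n) / lamθ (t n))^2)))
      + (1/2) * (∑' M : ℕ, ∫ t in ordSimplex (M + 1) T,
          poissonDensity lam T t * ∑ n : Fin (M + 1), (lam' (t n) / lam (t n))^2)
      + (lamθ' 0 / lamθ 0) * (∑' M : ℕ, ∫ s in ordSimplex M T,
          poissonDensity lam T (Fin.cons 0 s))
      - (lamθ' T / lamθ T) * (∑' M : ℕ, ∫ s in ordSimplex M T,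
          poissonDensity lam T (Fin.snoc s T)) := by
  have hTle : (0:ℝ) ≤ T := hT.le
  -- the clamping map
  set c : ℝ → ℝ := fun u => max 0 (min u T) with hcdef
  have hcmem : ∀ u, c u ∈ Set.Icc 0 T := fun u =>
    ⟨le_max_left _ _, max_le hTle (min_le_right _ _)⟩
  have hcid : ∀ u ∈ Set.Icc (0:ℝ) T, c u = u := by
    intro u hu
    rw [hcdef]
    simp only
    rw [min_eq_left hu.2, max_eq_right hu.1]
  have hccont : Continuous c := continuous_const.max (continuous_id.min continuous_const)
  -- clamped functions
  set L : ℝ → ℝ := fun u => lam (c u) with hLdef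
  set φg : ℝ → ℝ := fun u => lam' (c u) / lam (c u) with hφgdef
  set φθ : ℝ → ℝ := fun u => lamθ' (c u) / lamθ (c u) with hφθdef
  set w : ℝ → ℝ := fun u => lamθ'' (c u) / lamθ (c u) with hwdef
  set φd : ℝ → ℝ := fun u => φg u * φθ u + (w u - φθ u ^ 2) with hφddef
  set Φ : ℝ → ℝ := fun u => L u * φθ u with hΦdef
  set E : ℝ := Real.exp (-(∫ s in (0:ℝ)..T, lam s)) with hEdef
  -- continuity of original functions on Icc
  have hlamc : ContinuousOn lam (Set.Icc 0 T) :=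
    fun u hu => ((hlam u hu).continuousAt).continuousWithinAt
  have hlamθc : ContinuousOn lamθ (Set.Icc 0 T) :=
    fun u hu => ((hlamθ u hu).continuousAt).continuousWithinAt
  have hlamθ'c : ContinuousOn lamθ' (Set.Icc 0 T) :=
    fun u hu => ((hlamθ' u hu).continuousAt).continuousWithinAt
  -- continuity of clamped functions
  have hLc : Continuous L := by
    rw [hLdef]; exact hlamc.comp_continuous hccont hcmem
  have hlam'cc : Continuous (fun u => lam' (c u)) := hlam'c.comp_continuous hccont hcmem
  have hlamθcc : Continuous (fun u => lamθ (c u)) := hlamθc.comp_continuous hccont hcmem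
  have hlamθ'cc : Continuous (fun u => lamθ' (c u)) := hlamθ'c.comp_continuous hccont hcmem
  have hlamθ''cc : Continuous (fun u => lamθ'' (c u)) := hlamθ''c.comp_continuous hccont hcmem
  have hLpos : ∀ u, 0 < L u := fun u => hlampos _ (hcmem u)
  have hLθpos : ∀ u, 0 < lamθ (c u) := fun u => hlamθpos _ (hcmem u)
  have hφgc : Continuous φg := by
    rw [hφgdef]
    exact hlam'cc.div (by rw [hLdef] at hLc; exact hLc) (fun u => (hlampos _ (hcmem u)).ne')
  have hφθc : Continuous φθ := by
    rw [hφθdef]; exact hlamθ'cc.div hlamθcc (fun u => (hLθpos u).ne')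
  have hwc : Continuous w := by
    rw [hwdef]; exact hlamθ''cc.div hlamθcc (fun u => (hLθpos u).ne')
  have hφdc : Continuous φd := by
    rw [hφddef]; exact (hφgc.mul hφθc).add (hwc.sub (hφθc.pow 2))
  have hΦc : Continuous Φ := by rw [hΦdef]; exact hLc.mul hφθc
  -- pointwise identification on Icc
  have hLeq : ∀ u ∈ Set.Icc (0:ℝ) T, L u = lam u := by
    intro u hu; rw [hLdef]; simp only; rw [hcid u hu]
  have hφgeq : ∀ u ∈ Set.Icc (0:ℝ) T, φg u = lam' u / lam u := by
    intro u hu; rw [hφgdef]; simp only; rw [hcid u hu]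
  have hφθeq : ∀ u ∈ Set.Icc (0:ℝ) T, φθ u = lamθ' u / lamθ u := by
    intro u hu; rw [hφθdef]; simp only; rw [hcid u hu]
  have hweq : ∀ u ∈ Set.Icc (0:ℝ) T, w u = lamθ'' u / lamθ u := by
    intro u hu; rw [hwdef]; simp only; rw [hcid u hu]
  -- derivative of Φ on the interior
  have hΦd : ∀ x ∈ Set.Ioo (0:ℝ) T, HasDerivAt Φ (L x * φd x) x := by
    intro x hx
    have hxI : x ∈ Set.Icc (0:ℝ) T := Set.Ioo_subset_Icc_self hx
    have hev : ∀ᶠ u in nhds x, u ∈ Set.Ioo (0:ℝ) T := isOpen_Ioo.eventually_mem hx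
    have hLd : HasDerivAt L (lam' x) x := by
      refine (hlam x hxI).congr_of_eventuallyEq ?_
      filter_upwards [hev] with u hu
      exact congrArg lam (hcid u (Set.Ioo_subset_Icc_self hu))
    have hLθd : HasDerivAt (fun u => lamθ (c u)) (lamθ' x) x := by
      refine (hlamθ x hxI).congr_of_eventuallyEq ?_
      filter_upwards [hev] with u hu
      exact congrArg lamθ (hcid u (Set.Ioo_subset_Icc_self hu))
    have hLθ'd : HasDerivAt (fun u => lamθ' (c u)) (lamθ'' x) x := by
      refine (hlamθ' x hxI).congr_of_eventuallyEq ?_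
      filter_upwards [hev] with u hu
      exact congrArg lamθ' (hcid u (Set.Ioo_subset_Icc_self hu))
    have hne : lamθ (c x) ≠ 0 := (hLθpos x).ne'
    have h2 : HasDerivAt (fun u => lamθ' (c u) / lamθ (c u))
        ((lamθ'' x * lamθ (c x) - lamθ' (c x) * lamθ' x) / (lamθ (c x))^2) x :=
      hLθ'd.div hLθd hne
    have h3 : HasDerivAt (fun u => L u * (lamθ' (c u) / lamθ (c u)))
        (lam' x * (lamθ' (c x) / lamθ (c x))
          + L x * ((lamθ'' x * lamθ (c x) - lamθ' (c x) * lamθ' x) / (lamθ (c x))^2)) x :=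
      hLd.mul h2
    have hgoal : HasDerivAt Φ
        (lam' x * (lamθ' (c x) / lamθ (c x))
          + L x * ((lamθ'' x * lamθ (c x) - lamθ' (c x) * lamθ' x) / (lamθ (c x))^2)) x := by
      rw [hΦdef, hφθdef]; exact h3
    convert hgoal using 1
    rw [hφddef, hφgdef, hφθdef, hwdef, hLdef]
    simp only
    rw [hcid x hxI]
    have hlamne : lam x ≠ 0 := (hlampos x hxI).ne'
    have hlamθne : lamθ x ≠ 0 := (hlamθpos x hxI).ne'
    field_simp
  -- abbreviation for the simplex volume factor
  have hK : ∀ M : ℕ, ∫ t in ordSimplex M T, ∏ n, L (t n)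
      = (∫ u in (0:ℝ)..T, L u)^M / (Nat.factorial M) :=
    fun M => integral_ordSimplex_prod L hLc M T hTle
  have hQ : ∀ M : ℕ, ∫ t in ordSimplex (M+1) T, (∑ n, φd (t n)) * ∏ n, L (t n)
      = (∫ u in (0:ℝ)..T, L u)^M / (Nat.factorial M) * (Φ T - Φ 0) :=
    fun M => integral_ordSimplex_sum T L φd Φ hLc hφdc hΦc hΦd M T ⟨hTle, le_refl T⟩
  -- boundary integral values
  have hb0 : ∀ M : ℕ, (∫ s in ordSimplex M T, poissonDensity lam T (Fin.cons 0 s))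
      = lam 0 * E * ((∫ u in (0:ℝ)..T, L u)^M / (Nat.factorial M)) := by
    intro M
    have heq : Set.EqOn (fun s : Fin M → ℝ => poissonDensity lam T (Fin.cons 0 s))
        (fun s => (lam 0 * E) * ∏ n, L (s n)) (ordSimplex M T) := by
      intro s hs
      simp only [poissonDensity, ← hEdef]
      rw [Fin.prod_univ_succ]
      simp only [Fin.cons_zero, Fin.cons_succ]
      have : ∏ n : Fin M, lam (s n) = ∏ n : Fin M, L (s n) :=
        Finset.prod_congr rfl fun n _ => (hLeq (s n) (hs.2 n)).symm
      rw [this]; ring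
    rw [setIntegral_congr_fun (ordSimplex_isClosed M T).measurableSet heq,
      MeasureTheory.integral_const_mul, hK M]
  have hbT : ∀ M : ℕ, (∫ s in ordSimplex M T, poissonDensity lam T (Fin.snoc s T))
      = lam T * E * ((∫ u in (0:ℝ)..T, L u)^M / (Nat.factorial M)) := by
    intro M
    have heq : Set.EqOn (fun s : Fin M → ℝ => poissonDensity lam T (Fin.snoc s T))
        (fun s => (lam T * E) * ∏ n, L (s n)) (ordSimplex M T) := by
      intro s hs
      simp only [poissonDensity, ← hEdef]
      rw [Fin.prod_univ_castSucc]
      simp only [Fin.snoc_castSucc, Fin.snoc_last]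
      have : ∏ n : Fin M, lam (s n) = ∏ n : Fin M, L (s n) :=
        Finset.prod_congr rfl fun n _ => (hLeq (s n) (hs.2 n)).symm
      rw [this]; ring
    rw [setIntegral_congr_fun (ordSimplex_isClosed M T).measurableSet heq,
      MeasureTheory.integral_const_mul, hK M]
  -- a generic congruence for the main integrals
  have hcongr : ∀ (M : ℕ) (F G : ℝ → ℝ), (∀ u ∈ Set.Icc (0:ℝ) T, F u = G u) →
      (∫ t in ordSimplex (M+1) T, poissonDensity lam T t * ∑ n, F (t n))
        = ∫ t in ordSimplex (M+1) T, E * ((∑ n, G (t n)) * ∏ n, L (t n)) := by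
    intro M F G hFG
    apply setIntegral_congr_fun (ordSimplex_isClosed (M+1) T).measurableSet
    intro t ht
    simp only [poissonDensity, ← hEdef]
    have h1 : ∏ n : Fin (M+1), lam (t n) = ∏ n : Fin (M+1), L (t n) :=
      Finset.prod_congr rfl fun n _ => (hLeq (t n) (ht.2 n)).symm
    have h2 : ∑ n : Fin (M+1), F (t n) = ∑ n : Fin (M+1), G (t n) :=
      Finset.sum_congr rfl fun n _ => hFG (t n) (ht.2 n)
    rw [h1, h2]; ring
  -- clamped forms of the three main integrals
  have hAeq : ∀ M : ℕ, (∫ t in ordSimplex (M+1) T,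
      poissonDensity lam T t * ∑ n : Fin (M+1),
        (lam' (t n) / lam (t n) - lamθ' (t n) / lamθ (t n))^2)
      = ∫ t in ordSimplex (M+1) T, E * ((∑ n, (φg (t n) - φθ (t n))^2) * ∏ n, L (t n)) := by
    intro M
    exact hcongr M (fun u => (lam' u / lam u - lamθ' u / lamθ u)^2)
      (fun u => (φg u - φθ u)^2) (fun u hu => by simp only [hφgeq u hu, hφθeq u hu])
  have hBeq : ∀ M : ℕ, (∫ t in ordSimplex (M+1) T,
      poissonDensity lam T t * ∑ n : Fin (M+1),
        ((1/2) * (lamθ' (t n) / lamθ (t n))^2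
          + (lamθ'' (t n) / lamθ (t n) - (lamθ' (t n) / lamθ (t n))^2)))
      = ∫ t in ordSimplex (M+1) T,
          E * ((∑ n, ((1/2) * φθ (t n)^2 + (w (t n) - φθ (t n)^2))) * ∏ n, L (t n)) := by
    intro M
    exact hcongr M
      (fun u => (1/2) * (lamθ' u / lamθ u)^2 + (lamθ'' u / lamθ u - (lamθ' u / lamθ u)^2))
      (fun u => (1/2) * φθ u^2 + (w u - φθ u^2))
      (fun u hu => by simp only [hφθeq u hu, hweq u hu])
  have hCeq : ∀ M : ℕ, (∫ t in ordSimplex (M+1) T,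
      poissonDensity lam T t * ∑ n : Fin (M+1), (lam' (t n) / lam (t n))^2)
      = ∫ t in ordSimplex (M+1) T, E * ((∑ n, (φg (t n))^2) * ∏ n, L (t n)) := by
    intro M
    exact hcongr M (fun u => (lam' u / lam u)^2) (fun u => (φg u)^2)
      (fun u hu => by simp only [hφgeq u hu])
  -- linearity: the clamped A integral splits
  have hsplit : ∀ M : ℕ,
      (∫ t in ordSimplex (M+1) T, E * ((∑ n, (φg (t n) - φθ (t n))^2) * ∏ n, L (t n)))
      = 2 * (∫ t in ordSimplex (M+1) T,
            E * ((∑ n, ((1/2) * φθ (t n)^2 + (w (t n) - φθ (t n)^2))) * ∏ n, L (t n)))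
        + (∫ t in ordSimplex (M+1) T, E * ((∑ n, (φg (t n))^2) * ∏ n, L (t n)))
        - 2 * (∫ t in ordSimplex (M+1) T, E * ((∑ n, φd (t n)) * ∏ n, L (t n))) := by
    intro M
    have hcomp := ordSimplex_isCompact (M+1) T
    have mkcont : ∀ (ψ : ℝ → ℝ), Continuous ψ → Continuous (fun t : Fin (M+1) → ℝ =>
        E * ((∑ n, ψ (t n)) * ∏ n, L (t n))) := by
      intro ψ hψ
      exact continuous_const.mul
        ((continuous_finset_sum _ fun i _ => hψ.comp (continuous_apply i)).mul
          (continuous_finset_prod _ fun i _ => hLc.comp (continuous_apply i)))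
    have iB := ((mkcont (fun u => (1/2 : ℝ) * φθ u^2 + (w u - φθ u^2))
      ((continuous_const.mul (hφθc.pow 2)).add
        (hwc.sub (hφθc.pow 2)))).continuousOn).integrableOn_compact (μ := volume) hcomp
    have iC := ((mkcont (fun u => (φg u)^2)
      (hφgc.pow 2)).continuousOn).integrableOn_compact (μ := volume) hcomp
    have iD := ((mkcont φd hφdc).continuousOn).integrableOn_compact (μ := volume) hcomp
    have hpt : (fun t : Fin (M+1) → ℝ => E * ((∑ n, (φg (t n) - φθ (t n))^2) * ∏ n, L (t n)))
        = fun t => (2 * (E * ((∑ n, ((1/2) * φθ (t n)^2 + (w (t n) - φθ (t n)^2))) * ∏ n, L (t n)))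
            + E * ((∑ n, (φg (t n))^2) * ∏ n, L (t n)))
          - 2 * (E * ((∑ n, φd (t n)) * ∏ n, L (t n))) := by
      funext t
      have hsum : (∑ n : Fin (M+1), (φg (t n) - φθ (t n))^2)
          = ((∑ n : Fin (M+1), (2 * ((1/2) * φθ (t n)^2 + (w (t n) - φθ (t n)^2))
              + (φg (t n))^2))
            - ∑ n : Fin (M+1), 2 * φd (t n)) := by
        rw [← Finset.sum_sub_distrib]
        refine Finset.sum_congr rfl fun n _ => ?_
        rw [hφddef]
        simp only
        ring
      rw [hsum, Finset.sum_add_distrib]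
      rw [← Finset.mul_sum, ← Finset.mul_sum]
      ring
    have h3 : IntegrableOn (fun t : Fin (M+1) → ℝ =>
        2 * (E * ((∑ n, ((1/2) * φθ (t n)^2 + (w (t n) - φθ (t n)^2))) * ∏ n, L (t n))))
        (ordSimplex (M+1) T) volume := iB.const_mul 2
    have h4 : IntegrableOn (fun t : Fin (M+1) → ℝ =>
        E * ((∑ n, (φg (t n))^2) * ∏ n, L (t n)))
        (ordSimplex (M+1) T) volume := iC
    have h1 : IntegrableOn (fun t : Fin (M+1) → ℝ =>
        2 * (E * ((∑ n, ((1/2) * φθ (t n)^2 + (w (t n) - φθ (t n)^2))) * ∏ n, L (t n)))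
          + E * ((∑ n, (φg (t n))^2) * ∏ n, L (t n)))
        (ordSimplex (M+1) T) volume := h3.add h4
    have h2 : IntegrableOn (fun t : Fin (M+1) → ℝ =>
        2 * (E * ((∑ n, φd (t n)) * ∏ n, L (t n))))
        (ordSimplex (M+1) T) volume := iD.const_mul 2
    rw [hpt, MeasureTheory.integral_sub h1 h2, MeasureTheory.integral_add h3 h4,
      MeasureTheory.integral_const_mul 2, MeasureTheory.integral_const_mul 2]
  -- value of the D integral
  have hDval : ∀ M : ℕ, (∫ t in ordSimplex (M+1) T, E * ((∑ n, φd (t n)) * ∏ n, L (t n)))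
      = E * ((∫ u in (0:ℝ)..T, L u)^M / (Nat.factorial M) * (Φ T - Φ 0)) := by
    intro M
    rw [MeasureTheory.integral_const_mul, hQ M]
  -- endpoint values of Φ
  have hΦT : Φ T = lam T * (lamθ' T / lamθ T) := by
    rw [hΦdef]
    simp only
    rw [hLeq T ⟨hTle, le_refl T⟩, hφθeq T ⟨hTle, le_refl T⟩]
  have hΦ0 : Φ 0 = lam 0 * (lamθ' 0 / lamθ 0) := by
    rw [hΦdef]
    simp only
    rw [hLeq 0 ⟨le_refl 0, hTle⟩, hφθeq 0 ⟨le_refl 0, hTle⟩]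
  -- the per-M identity
  have hA : ∀ M : ℕ, (∫ t in ordSimplex (M+1) T,
      poissonDensity lam T t * ∑ n : Fin (M+1),
        (lam' (t n) / lam (t n) - lamθ' (t n) / lamθ (t n))^2)
      = 2 * (∫ t in ordSimplex (M+1) T,
            poissonDensity lam T t * ∑ n : Fin (M+1),
              ((1/2) * (lamθ' (t n) / lamθ (t n))^2
                + (lamθ'' (t n) / lamθ (t n) - (lamθ' (t n) / lamθ (t n))^2)))
        + (∫ t in ordSimplex (M+1) T,
            poissonDensity lam T t * ∑ n : Fin (M+1), (lam' (t n) / lam (t n))^2)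
        + (2 * (lamθ' 0 / lamθ 0)) * (∫ s in ordSimplex M T, poissonDensity lam T (Fin.cons 0 s))
        - (2 * (lamθ' T / lamθ T)) * (∫ s in ordSimplex M T,
            poissonDensity lam T (Fin.snoc s T)) := by
    intro M
    rw [hAeq M, hBeq M, hCeq M, hb0 M, hbT M, hsplit M, hDval M, hΦT, hΦ0]
    ring
  -- sum everything
  rw [tsum_congr hA]
  have s2 : Summable (fun M : ℕ => 2 * (∫ t in ordSimplex (M+1) T,
      poissonDensity lam T t * ∑ n : Fin (M+1),
        ((1/2) * (lamθ' (t n) / lamθ (t n))^2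
          + (lamθ'' (t n) / lamθ (t n) - (lamθ' (t n) / lamθ (t n))^2)))) := hS2.mul_left 2
  have s3 := hS3
  have s4 : Summable (fun M : ℕ => (2 * (lamθ' 0 / lamθ 0))
      * (∫ s in ordSimplex M T, poissonDensity lam T (Fin.cons 0 s))) := hS4.mul_left _
  have s5 : Summable (fun M : ℕ => (2 * (lamθ' T / lamθ T))
      * (∫ s in ordSimplex M T, poissonDensity lam T (Fin.snoc s T))) := hS5.mul_left _
  rw [Summable.tsum_sub (((s2.add s3).add s4)) s5, Summable.tsum_add (s2.add s3) s4, Summable.tsum_add s2 s3,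
    tsum_mul_left, tsum_mul_left, tsum_mul_left]
  ring
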